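/- arXiv:1108.3149 — 3 statements merged into one kernel-verified Lean document; each statement's English description precedes it below -/
import Mathlib

section
/- Let a < b be real numbers and let f : [a,b] → ℝ be absolutely continuous with f, f' ∈ L²(a,b). If f(a) = 0 or f(b) = 0, then ∫_a^b f(u)² du ≤ (4/π²)·(b−a)²·∫_a^b f'(u)² du. -/
open MeasureTheory Real Set
open scoped ENNReal NNReal

lemma sqrt_sq' : ∀ A : ℝ≥0∞, (A ^ (1/2:ℝ)) ^ (2:ℕ) = A := fun A => by
  rw [← ENNReal.rpow_natCast (A ^ (1/2:ℝ)) 2, ← ENNReal.rpow_mul]; norm_num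

lemma lintegral_CS (μ : Measure ℝ) (g h : ℝ → ℝ≥0∞) (hg : AEMeasurable g μ)
    (hh : AEMeasurable h μ) :
    (∫⁻ x, g x * h x ∂μ) ^ 2 ≤ (∫⁻ x, g x ^ 2 ∂μ) * (∫⁻ x, h x ^ 2 ∂μ) := by
  have H := ENNReal.lintegral_mul_le_Lp_mul_Lq μ (Real.holderConjugate_iff_eq_conjExponent
    (by norm_num) |>.2 (by norm_num) : Real.HolderConjugate 2 2) hg hh
  have hp : ∀ x : ℝ≥0∞, x ^ (2:ℝ) = x ^ 2 := fun x => by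
    rw [← ENNReal.rpow_natCast]; norm_num
  have H2 : (∫⁻ x, g x * h x ∂μ) ^ 2 ≤
      ((∫⁻ x, g x ^ (2:ℝ) ∂μ) ^ (1/2:ℝ) * (∫⁻ x, h x ^ (2:ℝ) ∂μ) ^ (1/2:ℝ)) ^ 2 :=
    pow_le_pow_left₀ (by positivity) H 2
  calc (∫⁻ x, g x * h x ∂μ) ^ 2 ≤ _ := H2
    _ = (∫⁻ x, g x ^ 2 ∂μ) * (∫⁻ x, h x ^ 2 ∂μ) := by
        rw [mul_pow, sqrt_sq', sqrt_sq']
        exact congrArg₂ (· * ·) (lintegral_congr fun x => hp _) (lintegral_congr fun x => hp _)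

lemma hasDeriv_sin (a c : ℝ) (u : ℝ) (hc : c ≠ 0) :
    HasDerivAt (fun u => Real.sin (c*(u-a)) / c) (Real.cos (c*(u-a))) u := by
  have h1 : HasDerivAt (fun u : ℝ => c*(u-a)) c u := by
    simpa using ((hasDerivAt_id u).sub_const a).const_mul c
  have := ((Real.hasDerivAt_sin (c*(u-a))).comp u h1).div_const c
  simpa [mul_div_assoc, mul_div_cancel_right₀ _ hc] using this

lemma hasDeriv_cos (a c : ℝ) (u : ℝ) (hc : c ≠ 0) :
    HasDerivAt (fun u => -Real.cos (c*(u-a)) / c^2) (Real.sin (c*(u-a)) / c) u := by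
  have h1 : HasDerivAt (fun u : ℝ => c*(u-a)) c u := by
    simpa using ((hasDerivAt_id u).sub_const a).const_mul c
  have := (((Real.hasDerivAt_cos (c*(u-a))).comp u h1).neg).div_const (c^2)
  refine this.congr_deriv ?_
  field_simp [pow_two]

lemma integral_cos_eval (a c : ℝ) {x : ℝ} (hc : c ≠ 0) :
    ∫ u in a..x, Real.cos (c*(u-a)) = Real.sin (c*(x-a)) / c := by
  rw [intervalIntegral.integral_eq_sub_of_hasDerivAt
    (fun u _ => hasDeriv_sin a c u hc)
    (Continuous.intervalIntegrable (by continuity) a x)]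
  simp

lemma integral_sin_eval (a b c : ℝ) {u : ℝ} (hc : c ≠ 0) :
    ∫ x in u..b, Real.sin (c*(x-a)) / c = (Real.cos (c*(u-a)) - Real.cos (c*(b-a))) / c^2 := by
  rw [intervalIntegral.integral_eq_sub_of_hasDerivAt
    (fun x _ => hasDeriv_cos a c x hc)
    (Continuous.intervalIntegrable (by continuity) u b)]
  ring

lemma key (a b : ℝ) (hab : a < b) (f f' : ℝ → ℝ) (hf' : Measurable f')
    (hrep : ∀ x ∈ Icc a b, f x = ∫ u in a..x, f' u) :
    ∫⁻ u in Ioc a b, ENNReal.ofReal ((f u)^2) ≤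
      ENNReal.ofReal (4 / π^2 * (b-a)^2) * ∫⁻ u in Ioc a b, ENNReal.ofReal ((f' u)^2) := by
  have hL : (0:ℝ) < b - a := sub_pos.2 hab
  set c : ℝ := π / (2*(b-a)) with hc_def
  have hc : 0 < c := div_pos Real.pi_pos (by linarith)
  have hba : b - a ≠ 0 := hL.ne'
  have hcb : c * (b - a) = π / 2 := by rw [hc_def]; field_simp
  have hcont_cos : Continuous fun u : ℝ => Real.cos (c*(u-a)) :=
    Real.continuous_cos.comp (continuous_const.mul (continuous_id.sub continuous_const))
  have hcont_sin : Continuous fun x : ℝ => Real.sin (c*(x-a)) / c :=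
    (Real.continuous_sin.comp (continuous_const.mul (continuous_id.sub continuous_const))).div_const c
  -- cos nonneg on [a,b], pos on [a,b)
  have harg : ∀ u ∈ Icc a b, c*(u-a) ∈ Icc 0 (π/2) := by
    intro u hu
    constructor
    · exact mul_nonneg hc.le (by linarith [hu.1])
    · rw [← hcb]; exact mul_le_mul_of_nonneg_left (by linarith [hu.2]) hc.le
  have hcos_nonneg : ∀ u ∈ Icc a b, 0 ≤ Real.cos (c*(u-a)) := fun u hu =>
    Real.cos_nonneg_of_mem_Icc ⟨by linarith [(harg u hu).1, Real.pi_pos], (harg u hu).2⟩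
  have hcos_pos : ∀ u ∈ Ico a b, 0 < Real.cos (c*(u-a)) := by
    intro u hu
    apply Real.cos_pos_of_mem_Ioo
    constructor
    · have := (harg u ⟨hu.1, hu.2.le⟩).1; linarith [Real.pi_pos]
    · rw [← hcb]
      exact mul_lt_mul_of_pos_left (by linarith [hu.2]) hc
  have hsin_nonneg : ∀ x ∈ Icc a b, 0 ≤ Real.sin (c*(x-a)) := fun x hx =>
    Real.sin_nonneg_of_nonneg_of_le_pi (harg x hx).1
      (le_trans (harg x hx).2 (by linarith [Real.pi_pos]))
  set A : ℝ → ℝ≥0∞ := fun u => ENNReal.ofReal (Real.cos (c*(u-a))) with hA_def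
  set W : ℝ → ℝ≥0∞ := fun u => ENNReal.ofReal ((f' u)^2) / A u with hW_def
  set S : ℝ → ℝ≥0∞ := fun x => ENNReal.ofReal (Real.sin (c*(x-a)) / c) with hS_def
  have hA_meas : Measurable A := ENNReal.measurable_ofReal.comp hcont_cos.measurable
  have hW_meas : Measurable W := by
    apply Measurable.div
    · exact ENNReal.measurable_ofReal.comp (hf'.pow_const 2)
    · exact hA_meas
  have hS_meas : Measurable S := ENNReal.measurable_ofReal.comp hcont_sin.measurable
  -- Claim A : integral of the weight
  have claimA : ∀ x ∈ Icc a b, ∫⁻ u in Ioc a x, A u = S x := by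
    intro x hx
    show ∫⁻ u in Ioc a x, A u = ENNReal.ofReal (Real.sin (c*(x-a)) / c)
    rw [← integral_cos_eval a c hc.ne', intervalIntegral.integral_of_le hx.1]
    rw [← ofReal_integral_eq_lintegral_ofReal]
    · exact hcont_cos.integrableOn_Ioc
    · filter_upwards [ae_restrict_mem measurableSet_Ioc] with u hu
      exact hcos_nonneg u ⟨hu.1.le, hu.2.trans hx.2⟩
  -- Claim B : integral of S over [u,b]
  have claimB : ∀ u ∈ Ioc a b, ∫⁻ x in Icc u b, S x
      = A u * ENNReal.ofReal (1/c^2) := by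
    intro u hu
    rw [← Measure.restrict_congr_set Ioc_ae_eq_Icc]
    have hint : ∫ x in u..b, Real.sin (c*(x-a)) / c = Real.cos (c*(u-a)) * (1/c^2) := by
      rw [integral_sin_eval a b c hc.ne', hcb, Real.cos_pi_div_two]
      ring
    show ∫⁻ x in Ioc u b, S x = ENNReal.ofReal (Real.cos (c*(u-a))) * ENNReal.ofReal (1/c^2)
    rw [hS_def, ← ENNReal.ofReal_mul (hcos_nonneg u ⟨hu.1.le, hu.2⟩), ← hint,
      intervalIntegral.integral_of_le hu.2, ← ofReal_integral_eq_lintegral_ofReal]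
    · exact hcont_sin.integrableOn_Ioc
    · filter_upwards [ae_restrict_mem measurableSet_Ioc] with x hx
      exact div_nonneg (hsin_nonneg x ⟨hu.1.le.trans hx.1.le, hx.2⟩) hc.le
  -- Step 1 : pointwise Cauchy-Schwarz bound
  have step1 : ∀ x ∈ Ioc a b, ENNReal.ofReal ((f x)^2) ≤ S x * ∫⁻ u in Ioc a x, W u := by
    intro x hx
    have hax : a ≤ x := hx.1.le
    have hxb : x ≤ b := hx.2
    have h1 : ENNReal.ofReal ((f x)^2) = (‖f x‖₊ : ℝ≥0∞) ^ 2 := by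
      rw [← sq_abs, ENNReal.ofReal_pow (abs_nonneg _), ← enorm_eq_nnnorm, Real.enorm_eq_ofReal_abs]
    have h2 : (‖f x‖₊ : ℝ≥0∞) ≤ ∫⁻ u in Ioc a x, (‖f' u‖₊ : ℝ≥0∞) := by
      rw [hrep x ⟨hax, hxb⟩, intervalIntegral.integral_of_le hax]
      exact enorm_integral_le_lintegral_enorm _
    have hb : ∀ᵐ u : ℝ ∂(volume.restrict (Ioc a x)), u ≠ b :=
      ae_restrict_of_ae (compl_mem_ae_iff.2 (volume_singleton : volume ({b}:Set ℝ) = 0))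
    have hae : ∀ᵐ u ∂(volume.restrict (Ioc a x)), (‖f' u‖₊ : ℝ≥0∞)
        = A u ^ (1/2:ℝ) * ((‖f' u‖₊:ℝ≥0∞) / A u ^ (1/2:ℝ)) := by
      filter_upwards [ae_restrict_mem measurableSet_Ioc, hb] with u hu hub
      have hub' : u < b := lt_of_le_of_ne (hu.2.trans hxb) hub
      have hA0 : A u ≠ 0 := (ENNReal.ofReal_pos.2 (hcos_pos u ⟨hu.1.le, hub'⟩)).ne'
      have h0 : A u ^ (1/2:ℝ) ≠ 0 :=
        (ENNReal.rpow_pos (lt_of_le_of_ne (by positivity) (Ne.symm hA0)) ENNReal.ofReal_ne_top).ne'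
      have ht : A u ^ (1/2:ℝ) ≠ ⊤ :=
        ENNReal.rpow_ne_top_of_nonneg (by norm_num) ENNReal.ofReal_ne_top
      rw [ENNReal.mul_div_cancel h0 ht]
    have hg_meas : AEMeasurable (fun u => A u ^ (1/2:ℝ)) (volume.restrict (Ioc a x)) :=
      (hA_meas.pow_const _).aemeasurable
    have hh_meas : AEMeasurable (fun u => (‖f' u‖₊:ℝ≥0∞) / A u ^ (1/2:ℝ))
        (volume.restrict (Ioc a x)) :=
      ((measurable_coe_nnreal_ennreal.comp hf'.nnnorm).div (hA_meas.pow_const _)).aemeasurable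
    have hCS := lintegral_CS (volume.restrict (Ioc a x)) _ _ hg_meas hh_meas
    calc ENNReal.ofReal ((f x)^2) = (‖f x‖₊ : ℝ≥0∞) ^ 2 := h1
      _ ≤ (∫⁻ u in Ioc a x, (‖f' u‖₊ : ℝ≥0∞)) ^ 2 := pow_le_pow_left₀ (by positivity) h2 2
      _ = (∫⁻ u in Ioc a x, A u ^ (1/2:ℝ) * ((‖f' u‖₊:ℝ≥0∞) / A u ^ (1/2:ℝ))) ^ 2 := by
          rw [lintegral_congr_ae hae]
      _ ≤ (∫⁻ u in Ioc a x, (A u ^ (1/2:ℝ)) ^ 2)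
            * (∫⁻ u in Ioc a x, ((‖f' u‖₊:ℝ≥0∞) / A u ^ (1/2:ℝ)) ^ 2) := hCS
      _ = S x * ∫⁻ u in Ioc a x, W u := by
          congr 1
          · rw [← claimA x ⟨hax, hxb⟩]
            exact lintegral_congr fun u => sqrt_sq' (A u)
          · refine lintegral_congr fun u => ?_
            rw [div_eq_mul_inv, mul_pow, ← ENNReal.inv_pow, sqrt_sq' (A u), hW_def,
              ← div_eq_mul_inv]
            congr 1
            rw [← sq_abs, ENNReal.ofReal_pow (abs_nonneg _), ← enorm_eq_nnnorm, Real.enorm_eq_ofReal_abs]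
  -- main chain
  have hb' : ∀ᵐ u : ℝ ∂(volume.restrict (Ioc a b)), u ≠ b :=
    ae_restrict_of_ae (compl_mem_ae_iff.2 (volume_singleton : volume ({b}:Set ℝ) = 0))
  set F : ℝ × ℝ → ℝ≥0∞ :=
    fun p => S p.1 * Set.indicator {q : ℝ × ℝ | q.2 ≤ q.1} (fun q => W q.2) p with hF_def
  have hF_meas : Measurable F :=
    (hS_meas.comp measurable_fst).mul
      ((hW_meas.comp measurable_snd).indicator (measurableSet_le measurable_snd measurable_fst))
  have hc2 : ENNReal.ofReal (1/c^2) = ENNReal.ofReal (4 / π^2 * (b-a)^2) := by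
    congr 1
    rw [hc_def]
    field_simp
    ring
  calc ∫⁻ u in Ioc a b, ENNReal.ofReal ((f u)^2)
      ≤ ∫⁻ x in Ioc a b, S x * ∫⁻ u in Ioc a x, W u := by
        refine lintegral_mono_ae ?_
        filter_upwards [ae_restrict_mem measurableSet_Ioc] with x hx using step1 x hx
    _ = ∫⁻ x in Ioc a b, ∫⁻ u in Ioc a b, F (x, u) := by
        refine lintegral_congr_ae ?_
        filter_upwards [ae_restrict_mem measurableSet_Ioc] with x hx
        have e1 : ∀ u, F (x, u) = S x * Set.indicator (Iic x) W u := by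
          intro u
          by_cases h : u ≤ x <;>
            simp [hF_def, Set.indicator_apply, h, Set.mem_setOf_eq, Set.mem_Iic]
        have hset2 : Iic x ∩ Ioc a b = Ioc a x := by
          ext u
          simp only [Set.mem_inter_iff, Set.mem_Iic, Set.mem_Ioc]
          exact ⟨fun hm => ⟨hm.2.1, hm.1⟩, fun hm => ⟨hm.2, hm.1, hm.2.trans hx.2⟩⟩
        rw [lintegral_congr e1, lintegral_const_mul' _ _ ENNReal.ofReal_ne_top,
          lintegral_indicator measurableSet_Iic, Measure.restrict_restrict measurableSet_Iic,
          hset2]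
    _ = ∫⁻ u in Ioc a b, ∫⁻ x in Ioc a b, F (x, u) :=
        lintegral_lintegral_swap hF_meas.aemeasurable
    _ = ∫⁻ u in Ioc a b, ENNReal.ofReal (1/c^2) * ENNReal.ofReal ((f' u)^2) := by
        refine lintegral_congr_ae ?_
        filter_upwards [ae_restrict_mem measurableSet_Ioc, hb'] with u hu hub
        have hub' : u < b := lt_of_le_of_ne hu.2 hub
        have hA0 : A u ≠ 0 := (ENNReal.ofReal_pos.2 (hcos_pos u ⟨hu.1.le, hub'⟩)).ne'
        have hWt : W u ≠ ⊤ := (ENNReal.div_lt_top ENNReal.ofReal_ne_top hA0).ne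
        have e1 : ∀ x, F (x, u) = Set.indicator (Ici u) (fun x => S x * W u) x := by
          intro x
          by_cases h : u ≤ x <;>
            simp [hF_def, Set.indicator_apply, h, Set.mem_setOf_eq, Set.mem_Ici]
        rw [lintegral_congr e1, lintegral_indicator measurableSet_Ici,
          Measure.restrict_restrict measurableSet_Ici]
        have hset : Ici u ∩ Ioc a b = Icc u b := by
          ext x
          simp only [Set.mem_inter_iff, Set.mem_Ici, Set.mem_Ioc, Set.mem_Icc]
          exact ⟨fun hm => ⟨hm.1, hm.2.2⟩, fun hm => ⟨hm.1, hu.1.trans_le hm.1, hm.2⟩⟩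
        rw [hset, lintegral_mul_const' _ _ hWt, claimB u hu]
        have hcan : ENNReal.ofReal ((f' u)^2) / A u * A u = ENNReal.ofReal ((f' u)^2) :=
          ENNReal.div_mul_cancel hA0 ENNReal.ofReal_ne_top
        calc A u * ENNReal.ofReal (1/c^2) * W u
            = ENNReal.ofReal (1/c^2) * (ENNReal.ofReal ((f' u)^2) / A u * A u) := by
              rw [hW_def]; ring
          _ = ENNReal.ofReal (1/c^2) * ENNReal.ofReal ((f' u)^2) := by rw [hcan]
    _ = ENNReal.ofReal (1/c^2) * ∫⁻ u in Ioc a b, ENNReal.ofReal ((f' u)^2) :=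
        lintegral_const_mul' _ _ ENNReal.ofReal_ne_top
    _ = ENNReal.ofReal (4 / π^2 * (b-a)^2) * ∫⁻ u in Ioc a b, ENNReal.ofReal ((f' u)^2) := by
        rw [hc2]

/-- **Wirtinger's inequality.** If `f` is absolutely continuous on `[a,b]` with
(weak) derivative `f'`, both square integrable on `(a,b)`, and `f` vanishes at one
endpoint, then `∫_a^b f² ≤ (4/π²)(b-a)² ∫_a^b f'²`. -/
theorem wirtinger_inequality (a b : ℝ) (hab : a < b) (f f' : ℝ → ℝ)
    (hmem : MemLp f 2 (volume.restrict (Set.Ioc a b)))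
    (hmem' : MemLp f' 2 (volume.restrict (Set.Ioc a b)))
    (hac : ∀ x ∈ Set.Icc a b, f x - f a = ∫ u in a..x, f' u)
    (hzero : f a = 0 ∨ f b = 0) :
    ∫ u in a..b, (f u) ^ 2 ≤ 4 / π ^ 2 * (b - a) ^ 2 * ∫ u in a..b, (f' u) ^ 2 := by
  have hK : (0:ℝ) ≤ 4 / π ^ 2 * (b - a) ^ 2 := by positivity
  have hsq : Integrable (fun u => (f u)^2) (volume.restrict (Set.Ioc a b)) := hmem.integrable_sq
  have hsq' : Integrable (fun u => (f' u)^2) (volume.restrict (Set.Ioc a b)) :=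
    hmem'.integrable_sq
  have hnn : (0:ℝ → ℝ) ≤ᵐ[volume.restrict (Set.Ioc a b)] fun u => (f u)^2 :=
    Filter.Eventually.of_forall fun u => sq_nonneg _
  have hnn' : (0:ℝ → ℝ) ≤ᵐ[volume.restrict (Set.Ioc a b)] fun u => (f' u)^2 :=
    Filter.Eventually.of_forall fun u => sq_nonneg _
  have hlhs : ENNReal.ofReal (∫ u in Set.Ioc a b, (f u)^2)
      = ∫⁻ u in Set.Ioc a b, ENNReal.ofReal ((f u)^2) :=
    ofReal_integral_eq_lintegral_ofReal hsq hnn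
  have hrhs : ENNReal.ofReal (∫ u in Set.Ioc a b, (f' u)^2)
      = ∫⁻ u in Set.Ioc a b, ENNReal.ofReal ((f' u)^2) :=
    ofReal_integral_eq_lintegral_ofReal hsq' hnn'
  -- reduction to the lintegral inequality
  suffices H : ∫⁻ u in Set.Ioc a b, ENNReal.ofReal ((f u)^2)
      ≤ ENNReal.ofReal (4 / π^2 * (b-a)^2) * ∫⁻ u in Set.Ioc a b, ENNReal.ofReal ((f' u)^2) by
    rw [intervalIntegral.integral_of_le hab.le, intervalIntegral.integral_of_le hab.le]
    have hfin : ENNReal.ofReal (4 / π^2 * (b-a)^2)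
        * ∫⁻ u in Set.Ioc a b, ENNReal.ofReal ((f' u)^2) ≠ ⊤ := by
      rw [← hrhs]
      exact ENNReal.mul_ne_top ENNReal.ofReal_ne_top ENNReal.ofReal_ne_top
    have := ENNReal.toReal_mono hfin H
    rw [← hlhs, ← hrhs, ← ENNReal.ofReal_mul hK, ENNReal.toReal_ofReal (integral_nonneg
      fun u => sq_nonneg _), ENNReal.toReal_ofReal (mul_nonneg hK (integral_nonneg
      fun u => sq_nonneg _))] at this
    exact this
  -- measurable representative of f'
  obtain ⟨f'', hf''meas, heq⟩ : ∃ g, Measurable g ∧ f' =ᵐ[volume.restrict (Set.Ioc a b)] g :=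
    ⟨hmem'.1.aemeasurable.mk f', hmem'.1.aemeasurable.measurable_mk,
      hmem'.1.aemeasurable.ae_eq_mk⟩
  have hlint_eq : ∫⁻ u in Set.Ioc a b, ENNReal.ofReal ((f'' u)^2)
      = ∫⁻ u in Set.Ioc a b, ENNReal.ofReal ((f' u)^2) := by
    refine lintegral_congr_ae ?_
    filter_upwards [heq] with u h
    rw [h]
  have hieq : ∀ x y, a ≤ x → y ≤ b → x ≤ y → ∫ u in x..y, f' u = ∫ u in x..y, f'' u := by
    intro x y hax hyb hxy
    rw [intervalIntegral.integral_of_le hxy, intervalIntegral.integral_of_le hxy]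
    exact integral_congr_ae (ae_restrict_of_ae_restrict_of_subset
      (Set.Ioc_subset_Ioc hax hyb) heq)
  rcases hzero with hfa | hfb
  · -- case f a = 0
    have hrep : ∀ x ∈ Set.Icc a b, f x = ∫ u in a..x, f'' u := by
      intro x hx
      rw [← hieq a x le_rfl hx.2 hx.1]
      have h := hac x hx
      rw [hfa, sub_zero] at h
      exact h
    calc ∫⁻ u in Set.Ioc a b, ENNReal.ofReal ((f u)^2)
        ≤ ENNReal.ofReal (4 / π^2 * (b-a)^2)
          * ∫⁻ u in Set.Ioc a b, ENNReal.ofReal ((f'' u)^2) :=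
          key a b hab f f'' hf''meas hrep
      _ = _ := by rw [hlint_eq]
  · -- case f b = 0 : reflect
    have hint' : IntervalIntegrable f' volume a b :=
      (intervalIntegrable_iff_integrableOn_Ioc_of_le hab.le).2
        (hmem'.integrable (by norm_num))
    set e : ℝ := a + b with he_def
    set g : ℝ → ℝ := fun x => f (e - x) with hg_def
    set g'' : ℝ → ℝ := fun x => -(f'' (e - x)) with hg''_def
    have hg''meas : Measurable g'' :=
      (hf''meas.comp (measurable_const.sub measurable_id)).neg
    have hrepg : ∀ x ∈ Set.Icc a b, g x = ∫ u in a..x, g'' u := by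
      intro x hx
      have hex : e - x ∈ Set.Icc a b := ⟨by simp [he_def]; linarith [hx.2],
        by simp [he_def]; linarith [hx.1]⟩
      have h1 := hac (e - x) hex
      have h2 := hac b ⟨hab.le, le_rfl⟩
      rw [hfb] at h2
      have h3 : f (e - x) = (∫ u in a..(e-x), f' u) - ∫ u in a..b, f' u := by linarith
      have hsub : IntervalIntegrable f' volume a (e - x) := by
        apply hint'.mono_set
        rw [Set.uIcc_of_le hex.1, Set.uIcc_of_le hab.le]
        exact Set.Icc_subset_Icc le_rfl hex.2
      have h4 : (∫ u in a..(e-x), f' u) - ∫ u in a..b, f' u = ∫ u in b..(e-x), f' u :=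
        intervalIntegral.integral_interval_sub_left hsub hint'
      have h5 : ∫ u in b..(e-x), f' u = -∫ u in (e-x)..b, f' u :=
        intervalIntegral.integral_symm _ _
      have h6 : ∫ u in (e-x)..b, f' u = ∫ u in (e-x)..b, f'' u :=
        hieq _ _ hex.1 le_rfl hex.2
      have h7 : ∫ u in a..x, g'' u = -∫ u in (e-x)..b, f'' u := by
        rw [hg''_def]
        rw [intervalIntegral.integral_neg]
        congr 1
        have h8 := intervalIntegral.integral_comp_sub_left (a := a) (b := x) f'' e
        rw [h8]
        congr 1
        rw [he_def]; ring
      rw [hg_def]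
      simp only []
      rw [h3, h4, h5, h6, ← h7]
    have hg := key a b hab g g'' hg''meas hrepg
    -- change of variables
    have hCoV : ∀ h : ℝ → ℝ≥0∞, (∫⁻ x in Set.Ioc a b, h (e - x))
        = ∫⁻ y in Set.Ioc a b, h y := by
      intro h
      have hcoe : ⇑(MeasurableEquiv.subLeft e) = fun t => e - t := rfl
      have hpre : (⇑(MeasurableEquiv.subLeft e)) ⁻¹' (Set.Ico a b) = Set.Ioc a b := by
        ext x
        rw [Set.mem_preimage, hcoe]
        simp only [Set.mem_preimage, hcoe, Set.mem_Ico, Set.mem_Ioc, he_def]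
        constructor
        · rintro ⟨h1, h2⟩; exact ⟨by linarith, by linarith⟩
        · rintro ⟨h1, h2⟩; exact ⟨by linarith, by linarith⟩
      have e1 : Measure.map (⇑(MeasurableEquiv.subLeft e)) (volume.restrict (Set.Ioc a b))
          = volume.restrict (Set.Ico a b) := by
        rw [← hpre, ← Measure.restrict_map (MeasurableEquiv.subLeft e).measurable
          measurableSet_Ico, hcoe, Measure.map_sub_left_eq_self volume e]
      calc ∫⁻ x in Set.Ioc a b, h (e - x)
          = ∫⁻ y, h y ∂(Measure.map (⇑(MeasurableEquiv.subLeft e))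
              (volume.restrict (Set.Ioc a b))) :=
            (lintegral_map_equiv h (MeasurableEquiv.subLeft e)).symm
        _ = ∫⁻ y in Set.Ico a b, h y := by rw [e1]
        _ = ∫⁻ y in Set.Ioc a b, h y := by
            rw [Measure.restrict_congr_set Ico_ae_eq_Ioc]
    have hLHS : ∫⁻ x in Set.Ioc a b, ENNReal.ofReal ((g x)^2)
        = ∫⁻ u in Set.Ioc a b, ENNReal.ofReal ((f u)^2) :=
      hCoV (fun y => ENNReal.ofReal ((f y)^2))
    have hRHS : ∫⁻ x in Set.Ioc a b, ENNReal.ofReal ((g'' x)^2)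
        = ∫⁻ u in Set.Ioc a b, ENNReal.ofReal ((f'' u)^2) := by
      have : ∀ x, ENNReal.ofReal ((g'' x)^2) = ENNReal.ofReal ((f'' (e - x))^2) := by
        intro x; rw [hg''_def]; simp [neg_pow]
      rw [lintegral_congr this]
      exact hCoV (fun y => ENNReal.ofReal ((f'' y)^2))
    rw [hLHS, hRHS, hlint_eq] at hg
    exact hg
end

section
/- Let T > 0 and let (t_n)_{n∈ℤ} be a T-dense sequence. Then for every f ∈ H¹(ℝ) (identified with its continuous representative), ‖f − Vf‖_{L²} ≤ (T/π)·‖f'‖_{L²}, where V is the piecewise-constant approximation operator associated with (t_n). -/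
open MeasureTheory Real Filter
open scoped ENNReal NNReal
open intervalIntegral

lemma sq_enorm_eq (y : ℝ) : ((‖y‖₊ : ℝ≥0∞)) ^ (2:ℝ) = ENNReal.ofReal (y ^ 2) := by
  rw [show ((2:ℝ)) = ((2:ℕ):ℝ) by norm_num, ENNReal.rpow_natCast,
    ← enorm_eq_nnnorm, ← ofReal_norm, ← ENNReal.ofReal_pow (norm_nonneg _),
    Real.norm_eq_abs, sq_abs]

lemma intA (a x ω : ℝ) (hω : ω ≠ 0) :
    ∫ u in a..x, Real.cos (ω * (u - a)) = Real.sin (ω * (x - a)) / ω := by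
  have h1 : ∫ u in a..x, Real.cos (ω * (u - a)) = ∫ u in (a-a)..(x-a), Real.cos (ω * u) :=
    intervalIntegral.integral_comp_sub_right (fun u => Real.cos (ω * u)) a
  rw [h1, intervalIntegral.integral_comp_mul_left (fun u => Real.cos u) hω]
  simp [integral_cos, div_eq_inv_mul]

lemma CSstep (φ : ℝ → ℝ) (hφ : Measurable φ) (a x ω : ℝ) (hω : 0 < ω) (hax : a ≤ x)
    (hcos : ∀ u ∈ Set.Ioc a x, 0 < Real.cos (ω * (u - a))) :
    ENNReal.ofReal ((∫ u in a..x, φ u)^2) ≤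
      ENNReal.ofReal (Real.sin (ω * (x - a)) / ω) *
        ∫⁻ u in Set.Ioc a x, ENNReal.ofReal (φ u ^ 2 / Real.cos (ω * (u - a))) := by
  set W : ℝ → ℝ≥0∞ := fun u => ENNReal.ofReal (Real.cos (ω * (u - a))) with hW
  set A : ℝ → ℝ≥0∞ := fun u => (W u) ^ ((2:ℝ)⁻¹) with hA
  set B : ℝ → ℝ≥0∞ := fun u => (‖φ u‖₊ : ℝ≥0∞) / A u with hB
  -- pointwise recombination on the set
  have hrec : ∀ u ∈ Set.Ioc a x, (‖φ u‖₊ : ℝ≥0∞) = A u * B u := by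
    intro u hu
    have hc := hcos u hu
    have hW0 : W u ≠ 0 := by simp [hW, ENNReal.ofReal_eq_zero, not_le, hc]
    have hWt : W u ≠ ⊤ := ENNReal.ofReal_ne_top
    have hA0 : A u ≠ 0 := by
      simp only [hA, ne_eq, ENNReal.rpow_eq_zero_iff]
      push_neg
      constructor
      · intro h; exact absurd h hW0
      · intro h; exact absurd h hWt
    have hAt : A u ≠ ⊤ := by
      simp only [hA, ne_eq, ENNReal.rpow_eq_top_iff]
      push_neg
      constructor
      · intro h; exact absurd h hW0
      · intro h; exact absurd h hWt
    rw [hB]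
    rw [ENNReal.mul_div_cancel hA0 hAt]
  -- step 1 : ofReal (I^2) = (∫⁻ ‖φ‖ₑ)^2 bound
  have h1 : ENNReal.ofReal ((∫ u in a..x, φ u)^2) ≤
      (∫⁻ u in Set.Ioc a x, (‖φ u‖₊ : ℝ≥0∞)) ^ (2:ℝ) := by
    have habs : ENNReal.ofReal (|∫ u in a..x, φ u|) ≤ ∫⁻ u in Set.Ioc a x, (‖φ u‖₊ : ℝ≥0∞) := by
      rw [intervalIntegral.integral_of_le hax]
      calc ENNReal.ofReal (|∫ u in Set.Ioc a x, φ u|)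
          = (‖∫ u in Set.Ioc a x, φ u‖₊ : ℝ≥0∞) := by
            rw [← Real.norm_eq_abs, ofReal_norm, enorm_eq_nnnorm]
      _ ≤ _ := enorm_integral_le_lintegral_enorm _
    calc ENNReal.ofReal ((∫ u in a..x, φ u)^2)
        = (ENNReal.ofReal (|∫ u in a..x, φ u|)) ^ (2:ℝ) := by
          rw [show ((2:ℝ)) = ((2:ℕ):ℝ) by norm_num, ENNReal.rpow_natCast,
            ← ENNReal.ofReal_pow (abs_nonneg _), sq_abs]
      _ ≤ _ := ENNReal.rpow_le_rpow habs (by norm_num)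
  have hWm : Measurable W := by
    apply ENNReal.measurable_ofReal.comp
    exact (Real.continuous_cos.comp (by continuity)).measurable
  have hAm : Measurable A := hWm.pow_const _
  have hBm : Measurable B := (measurable_coe_nnreal_ennreal.comp hφ.nnnorm).div hAm
  have h2 : (∫⁻ u in Set.Ioc a x, (‖φ u‖₊ : ℝ≥0∞)) = ∫⁻ u in Set.Ioc a x, A u * B u :=
    setLIntegral_congr_fun measurableSet_Ioc hrec
  have h3 : (∫⁻ u in Set.Ioc a x, A u * B u) ≤
      (∫⁻ u in Set.Ioc a x, A u ^ (2:ℝ)) ^ (1/(2:ℝ)) *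
        (∫⁻ u in Set.Ioc a x, B u ^ (2:ℝ)) ^ (1/(2:ℝ)) :=
    ENNReal.lintegral_mul_le_Lp_mul_Lq _ Real.HolderConjugate.two_two
      hAm.aemeasurable hBm.aemeasurable
  have h4 : (∫⁻ u in Set.Ioc a x, A u ^ (2:ℝ)) = ENNReal.ofReal (Real.sin (ω * (x - a)) / ω) := by
    have hAW : ∀ u, A u ^ (2:ℝ) = W u := by
      intro u
      show (W u ^ (2:ℝ)⁻¹) ^ (2:ℝ) = W u
      rw [← ENNReal.rpow_mul]
      norm_num
    simp only [hAW]
    rw [← ofReal_integral_eq_lintegral_ofReal]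
    · rw [← intervalIntegral.integral_of_le hax, intA a x ω hω.ne']
    · exact (Real.continuous_cos.comp (by continuity)).integrableOn_Ioc
    · filter_upwards [ae_restrict_mem measurableSet_Ioc] with u hu using (hcos u hu).le
  have h5 : (∫⁻ u in Set.Ioc a x, B u ^ (2:ℝ)) =
      ∫⁻ u in Set.Ioc a x, ENNReal.ofReal (φ u ^ 2 / Real.cos (ω * (u - a))) := by
    apply setLIntegral_congr_fun measurableSet_Ioc ?_
    intro u hu
    beta_reduce
    have hc := hcos u hu
    have hAW : A u ^ (2:ℝ) = W u := by
      show (W u ^ (2:ℝ)⁻¹) ^ (2:ℝ) = W u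
      rw [← ENNReal.rpow_mul]
      norm_num
    have hnn : ((‖φ u‖₊ : ℝ≥0∞)) ^ (2:ℝ) = ENNReal.ofReal (φ u ^ 2) := by
      rw [show ((2:ℝ)) = ((2:ℕ):ℝ) by norm_num, ENNReal.rpow_natCast,
        ← enorm_eq_nnnorm, ← ofReal_norm, ← ENNReal.ofReal_pow (norm_nonneg _),
        Real.norm_eq_abs, sq_abs]
    rw [hB, ENNReal.div_rpow_of_nonneg _ _ (by norm_num : (0:ℝ) ≤ 2), hAW, hnn, hW,
      ENNReal.ofReal_div_of_pos hc]
  calc ENNReal.ofReal ((∫ u in a..x, φ u)^2)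
      ≤ (∫⁻ u in Set.Ioc a x, A u * B u) ^ (2:ℝ) := by rw [← h2]; exact h1
    _ ≤ ((∫⁻ u in Set.Ioc a x, A u ^ (2:ℝ)) ^ (1/(2:ℝ)) *
        (∫⁻ u in Set.Ioc a x, B u ^ (2:ℝ)) ^ (1/(2:ℝ))) ^ (2:ℝ) :=
      ENNReal.rpow_le_rpow h3 (by norm_num)
    _ = (∫⁻ u in Set.Ioc a x, A u ^ (2:ℝ)) * (∫⁻ u in Set.Ioc a x, B u ^ (2:ℝ)) := by
      rw [ENNReal.mul_rpow_of_nonneg _ _ (by norm_num : (0:ℝ) ≤ 2),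
        ← ENNReal.rpow_mul, ← ENNReal.rpow_mul]
      norm_num
    _ = _ := by rw [h4, h5]

lemma intB (a u b ω : ℝ) (hω : ω ≠ 0) :
    ∫ x in u..b, Real.sin (ω * (x - a)) =
      (Real.cos (ω * (u - a)) - Real.cos (ω * (b - a))) / ω := by
  have h1 : ∫ x in u..b, Real.sin (ω * (x - a)) = ∫ x in (u-a)..(b-a), Real.sin (ω * x) :=
    intervalIntegral.integral_comp_sub_right (fun x => Real.sin (ω * x)) a
  rw [h1, intervalIntegral.integral_comp_mul_left (fun x => Real.sin x) hω]
  simp [integral_sin, div_eq_inv_mul]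








lemma wirtinger_right (φ : ℝ → ℝ) (hφ : Measurable φ) (a b M : ℝ) (hab : a ≤ b)
    (hM : b - a ≤ M) (hM0 : 0 < M) :
    ∫⁻ x in Set.Ioc a b, ENNReal.ofReal ((∫ u in a..x, φ u)^2) ≤
      ENNReal.ofReal ((2*M/π)^2) * ∫⁻ u in Set.Ioc a b, ENNReal.ofReal (φ u ^ 2) := by
  set ω : ℝ := π/(2*M) with hωdef
  have hω : 0 < ω := div_pos Real.pi_pos (by linarith)
  set S : ℝ → ℝ≥0∞ := fun x => ENNReal.ofReal (Real.sin (ω * (x - a)) / ω) with hS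
  set Q : ℝ → ℝ≥0∞ := fun u => ENNReal.ofReal (φ u ^ 2 / Real.cos (ω * (u - a))) with hQ
  set K : ℝ × ℝ → ℝ≥0∞ :=
    fun p => Set.indicator {p : ℝ × ℝ | p.2 ≤ p.1} (fun p => S p.1 * Q p.2) p with hK
  have hSm : Measurable S := by
    apply ENNReal.measurable_ofReal.comp
    exact ((Real.continuous_sin.comp (by continuity)).div_const _).measurable
  have hQm : Measurable Q := by
    apply ENNReal.measurable_ofReal.comp
    exact (hφ.pow_const 2).div (Real.continuous_cos.comp (by continuity)).measurable
  have hKm : Measurable K := by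
    apply Measurable.indicator
    · exact ((hSm.comp measurable_fst).mul (hQm.comp measurable_snd))
    · exact measurableSet_le measurable_snd measurable_fst
  -- bound on half-angle
  have hang : ∀ u, a ≤ u → u ≤ b → ω * (u - a) ≤ π/2 := by
    intro u hu1 hu2
    rw [hωdef]
    rw [div_mul_eq_mul_div, div_le_div_iff₀ (by linarith) (by norm_num)]
    have : u - a ≤ M := by linarith
    nlinarith [Real.pi_pos]
  have hcosb : 0 ≤ Real.cos (ω * (b - a)) :=
    Real.cos_nonneg_of_mem_Icc ⟨by nlinarith [Real.pi_pos, hω], hang b hab le_rfl⟩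
  -- step A : pointwise bound on Ioo a b
  have stepA : ∀ x ∈ Set.Ioo a b, ENNReal.ofReal ((∫ u in a..x, φ u)^2) ≤
      ∫⁻ u in Set.Ioc a b, K (x, u) := by
    intro x hx
    have hcosx : ∀ u ∈ Set.Ioc a x, 0 < Real.cos (ω * (u - a)) := by
      intro u hu
      apply Real.cos_pos_of_mem_Ioo
      constructor
      · have : 0 ≤ ω * (u - a) := by
          apply mul_nonneg hω.le; linarith [hu.1]
        nlinarith [Real.pi_pos]
      · have h1 : ω * (u - a) < ω * (b - a) := by
          apply mul_lt_mul_of_pos_left _ hω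
          have := hu.2; have := hx.2; linarith
        exact lt_of_lt_of_le h1 (hang b hab le_rfl)
    refine le_trans (CSstep φ hφ a x ω hω hx.1.le hcosx) ?_
    have heq : ∫⁻ u in Set.Ioc a b, K (x, u) =
        ∫⁻ u in Set.Ioc a b, (Set.Ioc a x).indicator Q u * S x := by
      apply setLIntegral_congr_fun measurableSet_Ioc ?_
      intro u hu
      simp only [hK]
      by_cases h : u ≤ x
      · rw [Set.indicator_of_mem (by exact h : (x,u) ∈ {p : ℝ × ℝ | p.2 ≤ p.1}),
          Set.indicator_of_mem (Set.mem_Ioc.mpr ⟨hu.1, h⟩), mul_comm]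
      · rw [Set.indicator_of_notMem (by exact h : ¬ (x,u) ∈ {p : ℝ × ℝ | p.2 ≤ p.1}),
          Set.indicator_of_notMem (fun hmem => h hmem.2)]
        simp
    rw [heq, lintegral_mul_const _ (hQm.indicator measurableSet_Ioc),
      setLIntegral_indicator measurableSet_Ioc]
    have : Set.Ioc a x ∩ Set.Ioc a b = Set.Ioc a x := by
      apply Set.inter_eq_left.mpr
      exact Set.Ioc_subset_Ioc le_rfl hx.2.le
    rw [this, mul_comm]
  -- step B : integrate, swap
  calc ∫⁻ x in Set.Ioc a b, ENNReal.ofReal ((∫ u in a..x, φ u)^2)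
      = ∫⁻ x in Set.Ioo a b, ENNReal.ofReal ((∫ u in a..x, φ u)^2) := by
        rw [Measure.restrict_congr_set Ioo_ae_eq_Ioc]
    _ ≤ ∫⁻ x in Set.Ioo a b, ∫⁻ u in Set.Ioc a b, K (x, u) := by
        apply lintegral_mono_ae
        filter_upwards [ae_restrict_mem measurableSet_Ioo] with x hx using stepA x hx
    _ = ∫⁻ x in Set.Ioc a b, ∫⁻ u in Set.Ioc a b, K (x, u) := by
        rw [Measure.restrict_congr_set Ioo_ae_eq_Ioc]
    _ = ∫⁻ u in Set.Ioc a b, ∫⁻ x in Set.Ioc a b, K (x, u) := by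
        apply lintegral_lintegral_swap hKm.aemeasurable
    _ ≤ ∫⁻ u in Set.Ioc a b, ENNReal.ofReal (1/ω^2) * ENNReal.ofReal (φ u ^ 2) := by
        apply lintegral_mono_ae
        filter_upwards [ae_restrict_mem measurableSet_Ioc] with u hu
        -- inner integral computation
        have hIcc : Set.Ici u ∩ Set.Ioc a b = Set.Icc u b := by
          ext x
          simp only [Set.mem_inter_iff, Set.mem_Ici, Set.mem_Ioc, Set.mem_Icc]
          constructor
          · rintro ⟨h1, _, h3⟩; exact ⟨h1, h3⟩
          · rintro ⟨h1, h2⟩; exact ⟨h1, lt_of_lt_of_le hu.1 h1, h2⟩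
        have heq : ∫⁻ x in Set.Ioc a b, K (x, u) =
            ∫⁻ x in Set.Icc u b, S x * Q u := by
          have : ∀ x ∈ Set.Ioc a b, K (x, u) =
              (Set.Ici u).indicator (fun x => S x * Q u) x := by
            intro x hx
            simp only [hK]
            by_cases h : u ≤ x
            · rw [Set.indicator_of_mem (by exact h : (x,u) ∈ {p : ℝ × ℝ | p.2 ≤ p.1}),
                Set.indicator_of_mem (by exact h)]
            · rw [Set.indicator_of_notMem (by exact h : ¬ (x,u) ∈ {p : ℝ × ℝ | p.2 ≤ p.1}),
                Set.indicator_of_notMem (by exact h)]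
          rw [setLIntegral_congr_fun measurableSet_Ioc this,
            setLIntegral_indicator measurableSet_Ici, hIcc]
        rw [heq, lintegral_mul_const _ hSm]
        -- compute ∫⁻ S over Icc u b
        have hub : u ≤ b := hu.2
        have hSint : ∫⁻ x in Set.Icc u b, S x =
            ENNReal.ofReal ((Real.cos (ω * (u - a)) - Real.cos (ω * (b - a))) / ω / ω) := by
          rw [← Measure.restrict_congr_set Ioc_ae_eq_Icc]
          rw [hS, ← ofReal_integral_eq_lintegral_ofReal]
          · rw [← intervalIntegral.integral_of_le hub]
            rw [intervalIntegral.integral_div, intB a u b ω hω.ne']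
          · exact ((Real.continuous_sin.comp (by continuity)).div_const _).integrableOn_Ioc
          · filter_upwards [ae_restrict_mem measurableSet_Ioc] with x hx
            apply div_nonneg _ hω.le
            apply Real.sin_nonneg_of_nonneg_of_le_pi
            · apply mul_nonneg hω.le; linarith [hx.1, hu.1]
            · linarith [hang x (le_trans hu.1.le hx.1.le) hx.2, Real.pi_pos]
        rw [hSint]
        -- final pointwise bound
        by_cases hc : 0 < Real.cos (ω * (u - a))
        · have hbound : (Real.cos (ω * (u - a)) - Real.cos (ω * (b - a))) / ω / ω ≤
              Real.cos (ω * (u - a)) / ω^2 := by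
            rw [div_div, ← sq]
            apply div_le_div_of_nonneg_right _ (by positivity)
            · linarith
          have hDnn : 0 ≤ (Real.cos (ω * (u - a)) - Real.cos (ω * (b - a))) / ω / ω := by
            have h1 : ω * (u - a) ≤ ω * (b - a) := by
              apply mul_le_mul_of_nonneg_left _ hω.le
              linarith [hu.2]
            have h2 : Real.cos (ω * (b - a)) ≤ Real.cos (ω * (u - a)) := by
              apply Real.cos_le_cos_of_nonneg_of_le_pi
              · apply mul_nonneg hω.le; linarith [hu.1]
              · linarith [hang b hab le_rfl, Real.pi_pos]
              · exact h1
            apply div_nonneg (div_nonneg (by linarith) hω.le) hω.le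
          calc ENNReal.ofReal ((Real.cos (ω * (u - a)) - Real.cos (ω * (b - a))) / ω / ω) * Q u
              = ENNReal.ofReal ((Real.cos (ω * (u - a)) - Real.cos (ω * (b - a))) / ω / ω *
                  (φ u ^ 2 / Real.cos (ω * (u - a)))) := by
                rw [hQ, ← ENNReal.ofReal_mul hDnn]
            _ ≤ ENNReal.ofReal (1/ω^2 * φ u ^ 2) := by
                apply ENNReal.ofReal_le_ofReal
                have h1 : (Real.cos (ω * (u - a)) - Real.cos (ω * (b - a))) / ω / ω *
                    (φ u ^ 2 / Real.cos (ω * (u - a))) ≤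
                    Real.cos (ω * (u - a)) / ω^2 * (φ u ^ 2 / Real.cos (ω * (u - a))) :=
                  mul_le_mul_of_nonneg_right hbound (by positivity)
                have h2 : Real.cos (ω * (u - a)) / ω^2 * (φ u ^ 2 / Real.cos (ω * (u - a))) =
                    1/ω^2 * φ u ^ 2 := by
                  field_simp
                linarith
            _ = ENNReal.ofReal (1/ω^2) * ENNReal.ofReal (φ u ^ 2) :=
                ENNReal.ofReal_mul (by positivity)
        · -- cos = 0 : Q u = 0
          have hcnn : 0 ≤ Real.cos (ω * (u - a)) := by
            apply Real.cos_nonneg_of_mem_Icc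
            constructor
            · have : 0 ≤ ω * (u - a) := mul_nonneg hω.le (by linarith [hu.1])
              nlinarith [Real.pi_pos]
            · exact hang u hu.1.le hu.2
          have hc0 : Real.cos (ω * (u - a)) = 0 := le_antisymm (not_lt.mp hc) hcnn
          have : Q u = 0 := by simp only [hQ]; simp [hc0]
          rw [this, mul_zero]
          exact zero_le
    _ = ENNReal.ofReal (1/ω^2) * ∫⁻ u in Set.Ioc a b, ENNReal.ofReal (φ u ^ 2) := by
        exact lintegral_const_mul _ ((hφ.pow_const 2).ennreal_ofReal)
    _ = ENNReal.ofReal ((2*M/π)^2) * ∫⁻ u in Set.Ioc a b, ENNReal.ofReal (φ u ^ 2) := by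
        congr 1
        rw [hωdef, div_pow, div_pow, one_div, inv_div]




lemma wirtinger_left (φ : ℝ → ℝ) (hφ : Measurable φ) (a b M : ℝ) (hab : a ≤ b)
    (hM : b - a ≤ M) (hM0 : 0 < M) :
    ∫⁻ x in Set.Ico a b, ENNReal.ofReal ((∫ u in x..b, φ u)^2) ≤
      ENNReal.ofReal ((2*M/π)^2) * ∫⁻ u in Set.Ico a b, ENNReal.ofReal (φ u ^ 2) := by
  set c : ℝ := a + b with hc
  set ψ : ℝ → ℝ := fun u => φ (c - u) with hψ
  have hψm : Measurable ψ := hφ.comp (measurable_const.sub measurable_id)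
  have hmp : MeasurePreserving (fun y : ℝ => c - y) volume volume :=
    Measure.measurePreserving_sub_left volume c
  have hemb : MeasurableEmbedding (fun y : ℝ => c - y) :=
    (Homeomorph.subLeft c).measurableEmbedding
  have hpre : (fun y : ℝ => c - y) ⁻¹' (Set.Ioc a b) = Set.Ico a b := by
    ext y
    simp only [Set.mem_preimage, Set.mem_Ioc, Set.mem_Ico, hc]
    constructor
    · rintro ⟨h1, h2⟩; constructor <;> linarith
    · rintro ⟨h1, h2⟩; constructor <;> linarith
  have key1 : ∫⁻ x in Set.Ico a b, ENNReal.ofReal ((∫ u in x..b, φ u)^2) =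
      ∫⁻ y in Set.Ioc a b, ENNReal.ofReal ((∫ u in a..y, ψ u)^2) := by
    rw [← hmp.setLIntegral_comp_preimage_emb hemb
      (fun y => ENNReal.ofReal ((∫ u in a..y, ψ u)^2)) (Set.Ioc a b), hpre]
    apply setLIntegral_congr_fun measurableSet_Ico ?_
    intro x _
    beta_reduce
    congr 2
    have : ∫ u in a..(c - x), ψ u = ∫ u in (c - (c-x))..(c - a), φ u :=
      intervalIntegral.integral_comp_sub_left φ c
    rw [this]
    congr 1 <;> [skip; rw [hc]] <;> ring
  have key2 : ∫⁻ u in Set.Ioc a b, ENNReal.ofReal (ψ u ^ 2) =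
      ∫⁻ u in Set.Ico a b, ENNReal.ofReal (φ u ^ 2) := by
    rw [← hmp.setLIntegral_comp_preimage_emb hemb
      (fun u => ENNReal.ofReal (ψ u ^ 2)) (Set.Ioc a b), hpre]
    exact setLIntegral_congr_fun measurableSet_Ico (fun x _ => by simp [hψ])
  rw [key1, ← key2]
  exact wirtinger_right ψ hψm a b M hab hM hM0


/-- `f ∈ H¹(ℝ)`, identified with its continuous representative. -/
structure MemH1 (f f' : ℝ → ℝ) : Prop where
  cont : Continuous f
  mem : MemLp f 2 (volume : Measure ℝ)
  mem' : MemLp f' 2 (volume : Measure ℝ)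
  ftc : ∀ a b : ℝ, f b - f a = ∫ u in a..b, f' u

/-- A strictly increasing sequence `(t_n)` with `t_n → ±∞` is `T`-dense if
`t_{n+1} − t_n ≤ T` for all `n`. -/
structure TDense (T : ℝ) (t : ℤ → ℝ) : Prop where
  mono : StrictMono t
  top : Tendsto t atTop atTop
  bot : Tendsto t atBot atBot
  dense : ∀ n : ℤ, t (n + 1) - t n ≤ T

/-- The midpoint `s_n = (t_{n−1} + t_n)/2`. -/
noncomputable def sPt (t : ℤ → ℝ) (n : ℤ) : ℝ := (t (n - 1) + t n) / 2

/-- The piecewise-constant approximation `(Vf)(x) = Σ_n f(t_n)·1_{[s_n,s_{n+1})}(x)`. -/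
noncomputable def Vop (t : ℤ → ℝ) (f : ℝ → ℝ) : ℝ → ℝ := fun x =>
  ∑' n : ℤ, Set.indicator (Set.Ico (sPt t n) (sPt t (n + 1))) (fun _ => f (t n)) x

/-- If `(t_n)` is `T`-dense, then for every `f ∈ H¹(ℝ)`,
`‖f − Vf‖_{L²} ≤ (T/π)‖f'‖_{L²}`. -/
theorem norm_sub_Vop_le (T : ℝ) (hT : 0 < T) (t : ℤ → ℝ) (ht : TDense T t)
    (f f' : ℝ → ℝ) (hf : MemH1 f f') :
    eLpNorm (fun x => f x - Vop t f x) 2 (volume : Measure ℝ) ≤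
      ENNReal.ofReal (T / π) * eLpNorm f' 2 (volume : Measure ℝ) := by
  -- measurable representative of f'
  set φ : ℝ → ℝ := (hf.mem'.aestronglyMeasurable).mk f' with hφdef
  have hφm : Measurable φ := (hf.mem'.aestronglyMeasurable).stronglyMeasurable_mk.measurable
  have hae : f' =ᵐ[volume] φ := (hf.mem'.aestronglyMeasurable).ae_eq_mk
  have ftcφ : ∀ a b : ℝ, f b - f a = ∫ u in a..b, φ u := by
    intro a b
    rw [hf.ftc a b]
    apply intervalIntegral.integral_congr_ae
    filter_upwards [hae] with x hx
    exact fun _ => hx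
  -- basic facts about sPt
  have hsle : ∀ n : ℤ, sPt t n ≤ t n := by
    intro n
    have := (ht.mono.monotone (show n - 1 ≤ n by linarith))
    rw [sPt]; linarith
  have hsucc : ∀ n : ℤ, sPt t (n+1) = (t n + t (n+1))/2 := by
    intro n; rw [sPt]; norm_num
  have htle : ∀ n : ℤ, t n ≤ sPt t (n+1) := by
    intro n
    have := (ht.mono.monotone (show n ≤ n + 1 by linarith))
    rw [hsucc]; linarith
  have hs_mono : Monotone (sPt t) := by
    apply monotone_int_of_le_succ
    intro n
    exact le_trans (hsle n) (htle n)
  have hles : ∀ n : ℤ, t (n-1) ≤ sPt t n := by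
    intro n
    have := (ht.mono.monotone (show n - 1 ≤ n by linarith))
    rw [sPt]; linarith
  -- cover
  have hshift : Tendsto (fun n : ℤ => n - 1) atTop atTop := by
    simpa [sub_eq_add_neg] using
      tendsto_atTop_add_const_right atTop (-1 : ℤ) (tendsto_id (α := ℤ))
  have hstop : Tendsto (sPt t) atTop atTop :=
    tendsto_atTop_mono hles (ht.top.comp hshift)
  have hsbot : Tendsto (sPt t) atBot atBot := tendsto_atBot_mono hsle ht.bot
  have hex : ∀ x : ℝ, ∃ n : ℤ, x ∈ Set.Ico (sPt t n) (sPt t (n+1)) := by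
    intro x
    have hbd : ∃ N : ℤ, ∀ n ≤ N, sPt t n ≤ x := by
      have := hsbot.eventually (eventually_le_atBot x)
      rw [eventually_atBot] at this
      exact this
    obtain ⟨N0, hN0⟩ := hbd
    have hinh : ∃ n : ℤ, x < sPt t n := (hstop.eventually (eventually_gt_atTop x)).exists
    obtain ⟨lb, hlb, hleast⟩ := Int.exists_least_of_bdd
      (⟨N0 + 1, fun z hz => by
        by_contra h
        push_neg at h
        exact absurd (hN0 z (by linarith)) (not_le.mpr hz)⟩ :
          ∃ b : ℤ, ∀ z : ℤ, x < sPt t z → b ≤ z) hinh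
    refine ⟨lb - 1, ?_, ?_⟩
    · by_contra h
      push_neg at h
      have := hleast _ h
      omega
    · rw [show lb - 1 + 1 = lb by ring]
      exact hlb
  -- disjointness
  have hdisj_lt : ∀ m n : ℤ, m < n →
      Disjoint (Set.Ico (sPt t m) (sPt t (m+1))) (Set.Ico (sPt t n) (sPt t (n+1))) := by
    intro m n hmn
    rw [Set.disjoint_left]
    intro x hxm hxn
    have h1 : sPt t (m+1) ≤ sPt t n := hs_mono (by linarith)
    linarith [hxm.2, hxn.1]
  have hdisj : Pairwise (Function.onFun Disjoint
      (fun n : ℤ => Set.Ico (sPt t n) (sPt t (n+1)))) := by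
    intro m n hmn
    rcases lt_or_gt_of_ne hmn with h | h
    · exact hdisj_lt m n h
    · exact (hdisj_lt n m h).symm
  -- value of Vop
  have hVop : ∀ n : ℤ, ∀ x ∈ Set.Ico (sPt t n) (sPt t (n+1)), Vop t f x = f (t n) := by
    intro n x hx
    rw [Vop]
    rw [tsum_eq_single n ?_]
    · exact Set.indicator_of_mem hx _
    · intro m hmn
      apply Set.indicator_of_notMem
      intro hxm
      exact Set.disjoint_left.mp (hdisj hmn) hxm hx
  -- per-interval estimate
  have key : ∀ n : ℤ,
      ∫⁻ x in Set.Ico (sPt t n) (sPt t (n+1)), ENNReal.ofReal ((f x - Vop t f x)^2) ≤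
        ENNReal.ofReal ((T/π)^2) *
          ∫⁻ x in Set.Ico (sPt t n) (sPt t (n+1)), ENNReal.ofReal (φ x ^ 2) := by
    intro n
    have hTle1 : t n - sPt t n ≤ T/2 := by
      have hd := ht.dense (n-1)
      rw [show n - 1 + 1 = n by ring] at hd
      rw [sPt]; linarith
    have hTle2 : sPt t (n+1) - t n ≤ T/2 := by
      have hd := ht.dense n
      rw [hsucc]; linarith
    have hsplit : Set.Ico (sPt t n) (sPt t (n+1)) =
        Set.Ico (sPt t n) (t n) ∪ Set.Ico (t n) (sPt t (n+1)) :=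
      (Set.Ico_union_Ico_eq_Ico (hsle n) (htle n)).symm
    have hcongr : ∫⁻ x in Set.Ico (sPt t n) (sPt t (n+1)),
        ENNReal.ofReal ((f x - Vop t f x)^2) =
        ∫⁻ x in Set.Ico (sPt t n) (sPt t (n+1)), ENNReal.ofReal ((f x - f (t n))^2) := by
      apply setLIntegral_congr_fun measurableSet_Ico ?_
      intro x hx
      beta_reduce
      rw [hVop n x hx]
    rw [hcongr, hsplit,
      lintegral_union measurableSet_Ico (Set.Ico_disjoint_Ico_same),
      lintegral_union measurableSet_Ico (Set.Ico_disjoint_Ico_same), mul_add]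
    apply add_le_add
    · -- left piece
      have hcongr2 : ∫⁻ x in Set.Ico (sPt t n) (t n), ENNReal.ofReal ((f x - f (t n))^2) =
          ∫⁻ x in Set.Ico (sPt t n) (t n), ENNReal.ofReal ((∫ u in x..(t n), φ u)^2) := by
        apply setLIntegral_congr_fun measurableSet_Ico ?_
        intro x _
        beta_reduce
        have h1 := ftcφ x (t n)
        have h2 : f x - f (t n) = -(∫ u in x..(t n), φ u) := by linarith
        rw [h2, neg_sq]
      rw [hcongr2]
      have := wirtinger_left φ hφm (sPt t n) (t n) (T/2) (hsle n) hTle1 (by linarith)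
      rwa [show 2*(T/2)/π = T/π by ring] at this
    · -- right piece
      have hIoc : (volume : Measure ℝ).restrict (Set.Ico (t n) (sPt t (n+1))) =
          (volume : Measure ℝ).restrict (Set.Ioc (t n) (sPt t (n+1))) :=
        Measure.restrict_congr_set Ico_ae_eq_Ioc
      have hcongr2 : ∫⁻ x in Set.Ico (t n) (sPt t (n+1)), ENNReal.ofReal ((f x - f (t n))^2) =
          ∫⁻ x in Set.Ioc (t n) (sPt t (n+1)),
            ENNReal.ofReal ((∫ u in (t n)..x, φ u)^2) := by
        rw [hIoc]
        apply lintegral_congr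
        intro x
        rw [ftcφ (t n) x]
      rw [hcongr2, hIoc]
      have := wirtinger_right φ hφm (t n) (sPt t (n+1)) (T/2) (htle n) hTle2 (by linarith)
      rwa [show 2*(T/2)/π = T/π by ring] at this
  -- global lintegral estimate
  have hU : (⋃ n : ℤ, Set.Ico (sPt t n) (sPt t (n+1))) = Set.univ :=
    Set.eq_univ_of_forall (fun x => Set.mem_iUnion.mpr (hex x))
  have main : ∫⁻ x, ENNReal.ofReal ((f x - Vop t f x)^2) ≤
      ENNReal.ofReal ((T/π)^2) * ∫⁻ x, ENNReal.ofReal (φ x ^ 2) := by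
    calc ∫⁻ x, ENNReal.ofReal ((f x - Vop t f x)^2)
        = ∫⁻ x in ⋃ n : ℤ, Set.Ico (sPt t n) (sPt t (n+1)),
            ENNReal.ofReal ((f x - Vop t f x)^2) := by rw [hU, Measure.restrict_univ]
      _ = ∑' n : ℤ, ∫⁻ x in Set.Ico (sPt t n) (sPt t (n+1)),
            ENNReal.ofReal ((f x - Vop t f x)^2) :=
          lintegral_iUnion (fun _ => measurableSet_Ico) hdisj _
      _ ≤ ∑' n : ℤ, ENNReal.ofReal ((T/π)^2) *
            ∫⁻ x in Set.Ico (sPt t n) (sPt t (n+1)), ENNReal.ofReal (φ x ^ 2) :=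
          ENNReal.tsum_le_tsum key
      _ = ENNReal.ofReal ((T/π)^2) * ∑' n : ℤ,
            ∫⁻ x in Set.Ico (sPt t n) (sPt t (n+1)), ENNReal.ofReal (φ x ^ 2) :=
          ENNReal.tsum_mul_left
      _ = ENNReal.ofReal ((T/π)^2) * ∫⁻ x, ENNReal.ofReal (φ x ^ 2) := by
          rw [← lintegral_iUnion (fun _ => measurableSet_Ico) hdisj, hU,
            Measure.restrict_univ]
  -- conclude with square roots
  have hTπ : 0 ≤ T/π := div_nonneg hT.le Real.pi_pos.le
  have e1 : eLpNorm (fun x => f x - Vop t f x) 2 (volume : Measure ℝ) =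
      (∫⁻ x, ENNReal.ofReal ((f x - Vop t f x)^2)) ^ ((1:ℝ)/2) := by
    rw [eLpNorm_eq_lintegral_rpow_enorm_toReal (by norm_num) (by norm_num)]
    have h2 : ((2:ℝ≥0∞)).toReal = (2:ℝ) := by norm_num
    rw [h2]
    congr 1
    apply lintegral_congr
    intro x
    exact sq_enorm_eq _
  have e2 : eLpNorm f' 2 (volume : Measure ℝ) =
      (∫⁻ x, ENNReal.ofReal (φ x ^ 2)) ^ ((1:ℝ)/2) := by
    rw [eLpNorm_congr_ae hae, eLpNorm_eq_lintegral_rpow_enorm_toReal (by norm_num) (by norm_num)]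
    have h2 : ((2:ℝ≥0∞)).toReal = (2:ℝ) := by norm_num
    rw [h2]
    congr 1
    apply lintegral_congr
    intro x
    exact sq_enorm_eq _
  rw [e1, e2]
  calc (∫⁻ x, ENNReal.ofReal ((f x - Vop t f x)^2)) ^ ((1:ℝ)/2)
      ≤ (ENNReal.ofReal ((T/π)^2) * ∫⁻ x, ENNReal.ofReal (φ x ^ 2)) ^ ((1:ℝ)/2) :=
        ENNReal.rpow_le_rpow main (by norm_num)
    _ = ENNReal.ofReal ((T/π)^2) ^ ((1:ℝ)/2) *
        (∫⁻ x, ENNReal.ofReal (φ x ^ 2)) ^ ((1:ℝ)/2) :=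
        ENNReal.mul_rpow_of_nonneg _ _ (by norm_num)
    _ = ENNReal.ofReal (T/π) * (∫⁻ x, ENNReal.ofReal (φ x ^ 2)) ^ ((1:ℝ)/2) := by
        congr 1
        rw [ENNReal.ofReal_pow hTπ, ← ENNReal.rpow_natCast (ENNReal.ofReal (T/π)) 2,
          ← ENNReal.rpow_mul]
        norm_num
end

section
/- Let T > 0 and let (t_n)_{n∈ℤ} be a T-dense sequence. Then for every f ∈ H¹(ℝ) (identified with its continuous representative), the function V'f defined by (V'f)(t) = Σ_{n∈ℤ} f(s_{n+1})·1_{[t_n, t_{n+1})}(t), where s_n = (t_{n−1}+t_n)/2, belongs to L²(ℝ) and satisfies ‖V'f‖²_{L²} ≤ (T+1)·‖f‖²_{L²} + T·‖f'‖²_{L²} ≤ (T+1)·‖f‖²_{H¹}. In particular V' is a bounded linear operator from H¹(ℝ) to L²(ℝ). -/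
open MeasureTheory Real Filter
open scoped ENNReal

/-- The operator `(V'f)(x) = Σ_n f(s_{n+1})·1_{[t_n,t_{n+1})}(x)`. -/
noncomputable def V'op (t : ℤ → ℝ) (f : ℝ → ℝ) : ℝ → ℝ := fun x =>
  ∑' n : ℤ, Set.indicator (Set.Ico (t n) (t (n + 1))) (fun _ => f (sPt t (n + 1))) x

/-- Half-square identity: `∫_c^d g(u)·(∫_c^u g) du = (∫_c^d g)²/2`, by Fubini. -/
private lemma halfsq (g : ℝ → ℝ) (c d : ℝ) (hg : IntegrableOn g (Set.Ioc c d)) :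
    ∫ u in Set.Ioc c d, g u * ∫ v in Set.Ioc c u, g v
      = (∫ u in Set.Ioc c d, g u) ^ 2 / 2 := by
  set μ := (volume : Measure ℝ).restrict (Set.Ioc c d) with hμdef
  have hgi : Integrable g μ := hg
  set P : ℝ × ℝ → ℝ := fun p => g p.1 * g p.2 with hPdef
  have hP : Integrable P (μ.prod μ) := hgi.mul_prod hgi
  set S : Set (ℝ × ℝ) := {p | p.2 ≤ p.1} with hSdef
  have hS : MeasurableSet S := measurableSet_le measurable_snd measurable_fst
  have hk : Integrable (S.indicator P) (μ.prod μ) := hP.indicator hS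
  have hk' : Integrable (Sᶜ.indicator P) (μ.prod μ) := hP.indicator hS.compl
  -- the diagonal is a null set
  have hdiag : (μ.prod μ) {p : ℝ × ℝ | p.2 = p.1} = 0 := by
    have hm : MeasurableSet {p : ℝ × ℝ | p.2 = p.1} :=
      measurableSet_eq_fun measurable_snd measurable_fst
    rw [Measure.prod_apply hm]
    have hz : ∀ x : ℝ, μ (Prod.mk x ⁻¹' {p : ℝ × ℝ | p.2 = p.1}) = 0 := by
      intro x
      have hpre : Prod.mk x ⁻¹' {p : ℝ × ℝ | p.2 = p.1} ⊆ {x} := by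
        intro y hy
        simp only [Set.mem_preimage, Set.mem_setOf_eq] at hy
        simp [hy]
      refine measure_mono_null hpre ?_
      have h1 : μ {x} ≤ (volume : Measure ℝ) {x} := Measure.restrict_le_self _
      have h2 : (volume : Measure ℝ) {x} = 0 := measure_singleton x
      exact le_antisymm (h2 ▸ h1) (zero_le)
    simp [hz]
  -- swap symmetry: the two triangles have the same integral
  have hswap : ∫ p, Sᶜ.indicator P p ∂(μ.prod μ) = ∫ p, S.indicator P p ∂(μ.prod μ) := by
    have h1 : ∫ p, Sᶜ.indicator P (Prod.swap p) ∂(μ.prod μ)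
        = ∫ p, Sᶜ.indicator P p ∂(μ.prod μ) := integral_prod_swap _
    rw [← h1]
    refine integral_congr_ae ?_
    have hae : ∀ᵐ p ∂(μ.prod μ), p.2 ≠ p.1 := by
      rw [ae_iff]
      simpa using hdiag
    filter_upwards [hae] with p hp
    by_cases h : p.2 ≤ p.1
    · have hlt : p.2 < p.1 := lt_of_le_of_ne h hp
      have h1 : Prod.swap p ∈ Sᶜ := by
        simp only [hSdef, Set.mem_compl_iff, Set.mem_setOf_eq, Prod.snd_swap, Prod.fst_swap,
          not_le]
        exact hlt
      have h2 : p ∈ S := h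
      rw [Set.indicator_of_mem h1, Set.indicator_of_mem h2]
      simp only [hPdef, Prod.fst_swap, Prod.snd_swap]
      ring
    · have h1 : Prod.swap p ∉ Sᶜ := by
        simp only [hSdef, Set.mem_compl_iff, Set.mem_setOf_eq, Prod.snd_swap, Prod.fst_swap,
          not_le, not_lt]
        exact le_of_not_ge h
      have h2 : p ∉ S := h
      rw [Set.indicator_of_notMem h1, Set.indicator_of_notMem h2]
  -- total integral over the square
  have htot : ∫ p, P p ∂(μ.prod μ) = (∫ u, g u ∂μ) ^ 2 := by
    rw [integral_prod _ hP]
    have : ∀ x : ℝ, (∫ y, g x * g y ∂μ) = g x * ∫ y, g y ∂μ := fun x =>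
      integral_const_mul _ _
    simp_rw [hPdef, this, integral_mul_const, sq]
  have hsum : (∫ p, S.indicator P p ∂(μ.prod μ)) + ∫ p, Sᶜ.indicator P p ∂(μ.prod μ)
      = (∫ u, g u ∂μ) ^ 2 := by
    rw [← integral_add hk hk', ← htot]
    congr 1
    funext p
    exact congrFun (S.indicator_self_add_compl P) p
  -- compute the triangle integral as an iterated integral
  have hAiter : ∫ p, S.indicator P p ∂(μ.prod μ)
      = ∫ x, (∫ y, S.indicator P (x, y) ∂μ) ∂μ := integral_prod _ hk
  have hinner : ∀ x ∈ Set.Ioc c d,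
      (∫ y, S.indicator P (x, y) ∂μ) = g x * ∫ v in Set.Ioc c x, g v := by
    intro x hx
    have h1 : (fun y => S.indicator P (x, y)) = (Set.Iic x).indicator (fun y => g x * g y) := by
      funext y
      simp only [Set.indicator_apply, Set.mem_Iic, hSdef, Set.mem_setOf_eq, hPdef]
    rw [h1, integral_indicator measurableSet_Iic, hμdef,
      Measure.restrict_restrict measurableSet_Iic]
    have h2 : Set.Iic x ∩ Set.Ioc c d = Set.Ioc c x := by
      ext y
      simp only [Set.mem_inter_iff, Set.mem_Iic, Set.mem_Ioc]
      exact ⟨fun ⟨h1', h2', _⟩ => ⟨h2', h1'⟩, fun ⟨h1', h2'⟩ => ⟨h2', h1', h2'.trans hx.2⟩⟩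
    rw [h2, integral_const_mul]
  have hA : ∫ p, S.indicator P p ∂(μ.prod μ)
      = ∫ u in Set.Ioc c d, g u * ∫ v in Set.Ioc c u, g v := by
    rw [hAiter]
    exact setIntegral_congr_fun measurableSet_Ioc fun x hx => hinner x hx
  rw [hswap] at hsum
  rw [← hA]
  linarith [hsum]

private lemma h1_int_Icc (f f' : ℝ → ℝ) (hf : MemH1 f f') (c d : ℝ) :
    IntegrableOn f' (Set.Icc c d) volume :=
  (hf.mem'.locallyIntegrable one_le_two).integrableOn_isCompact isCompact_Icc

private lemma h1_int_Ioc (f f' : ℝ → ℝ) (hf : MemH1 f f') (c d : ℝ) :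
    IntegrableOn f' (Set.Ioc c d) volume :=
  (h1_int_Icc f f' hf c d).mono_set Set.Ioc_subset_Icc_self

private lemma h1_int_mul (f f' : ℝ → ℝ) (hf : MemH1 f f') (c d : ℝ) :
    IntegrableOn (fun u => 2 * f u * f' u) (Set.Ioc c d) volume := by
  have hc : Continuous fun u => 2 * f u := continuous_const.mul hf.cont
  have h := (h1_int_Icc f f' hf c d).mul_continuousOn hc.continuousOn isCompact_Icc
  have he : (fun u => f' u * (2 * f u)) = fun u => 2 * f u * f' u := by
    funext u; ring
  rw [he] at h
  exact h.mono_set Set.Ioc_subset_Icc_self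

/-- FTC for the square: `f(b)² − f(a)² = ∫_a^b 2 f f'`. -/
private lemma sq_diff (f f' : ℝ → ℝ) (hf : MemH1 f f') {a b : ℝ} (hab : a ≤ b) :
    f b ^ 2 - f a ^ 2 = ∫ u in Set.Ioc a b, 2 * f u * f' u := by
  have hivl : ∀ c d : ℝ, IntervalIntegrable f' volume c d := by
    intro c d
    rw [intervalIntegrable_iff]
    exact h1_int_Ioc f f' hf _ _
  have hftc : ∀ c d : ℝ, c ≤ d → f d = f c + ∫ u in Set.Ioc c d, f' u := by
    intro c d hcd
    have h := hf.ftc c d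
    rw [intervalIntegral.integral_of_le hcd] at h
    linarith
  set D := ∫ u in Set.Ioc a b, f' u with hD
  have Pc : Continuous fun u => ∫ v in a..u, f' v :=
    intervalIntegral.continuous_primitive hivl a
  have hmulP : IntegrableOn (fun u => f' u * ∫ v in a..u, f' v) (Set.Ioc a b) volume := by
    have h := (h1_int_Icc f f' hf a b).mul_continuousOn Pc.continuousOn isCompact_Icc
    exact h.mono_set Set.Ioc_subset_Icc_self
  have key : ∫ u in Set.Ioc a b, 2 * f u * f' u
      = 2 * f a * D + 2 * ∫ u in Set.Ioc a b, f' u * ∫ v in a..u, f' v := by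
    have h1 : Set.EqOn (fun u => 2 * f u * f' u)
        (fun u => 2 * f a * f' u + 2 * (f' u * ∫ v in a..u, f' v)) (Set.Ioc a b) := by
      intro u hu
      have h2 := hftc a u hu.1.le
      show 2 * f u * f' u = 2 * f a * f' u + 2 * (f' u * ∫ v in a..u, f' v)
      rw [intervalIntegral.integral_of_le hu.1.le, h2]
      ring
    rw [setIntegral_congr_fun measurableSet_Ioc h1,
      integral_add ((h1_int_Ioc f f' hf a b).const_mul _) (hmulP.const_mul 2),
      integral_const_mul, integral_const_mul]
  have heq : ∫ u in Set.Ioc a b, f' u * ∫ v in a..u, f' v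
      = ∫ u in Set.Ioc a b, f' u * ∫ v in Set.Ioc a u, f' v := by
    refine setIntegral_congr_fun measurableSet_Ioc fun u hu => ?_
    show f' u * ∫ v in a..u, f' v = f' u * ∫ v in Set.Ioc a u, f' v
    rw [intervalIntegral.integral_of_le hu.1.le]
  have hhalf := halfsq f' a b (h1_int_Ioc f f' hf a b)
  have hb := hftc a b hab
  rw [key, heq, hhalf, hb]
  ring

/-- Pointwise bound: for `x, s ∈ [a,b]`, `f(s)² ≤ f(x)² + ∫_a^b (f² + f'²)`. -/
private lemma ptBound (f f' : ℝ → ℝ) (hf : MemH1 f f') {a b x s : ℝ}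
    (hx : x ∈ Set.Icc a b) (hs : s ∈ Set.Icc a b) :
    f s ^ 2 ≤ f x ^ 2 + ∫ u in Set.Ioc a b, (f u ^ 2 + f' u ^ 2) := by
  have hI : IntegrableOn (fun u => f u ^ 2 + f' u ^ 2) (Set.Ioc a b) volume :=
    (hf.mem.integrable_sq.add hf.mem'.integrable_sq).integrableOn
  have hnn : 0 ≤ᵐ[volume.restrict (Set.Ioc a b)] fun u => f u ^ 2 + f' u ^ 2 :=
    Filter.Eventually.of_forall fun u => by positivity
  have habs : ∀ c d : ℝ, a ≤ c → d ≤ b →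
      |∫ u in Set.Ioc c d, 2 * f u * f' u| ≤ ∫ u in Set.Ioc a b, (f u ^ 2 + f' u ^ 2) := by
    intro c d h1 h2
    have hmul := h1_int_mul f f' hf c d
    have hIcd : IntegrableOn (fun u => f u ^ 2 + f' u ^ 2) (Set.Ioc c d) volume :=
      hI.mono_set (Set.Ioc_subset_Ioc h1 h2)
    have step1 : |∫ u in Set.Ioc c d, 2 * f u * f' u|
        ≤ ∫ u in Set.Ioc c d, |2 * f u * f' u| := by
      have := norm_integral_le_integral_norm (μ := volume.restrict (Set.Ioc c d))
        (f := fun u => 2 * f u * f' u)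
      simpa only [Real.norm_eq_abs] using this
    have step2 : ∫ u in Set.Ioc c d, |2 * f u * f' u|
        ≤ ∫ u in Set.Ioc c d, (f u ^ 2 + f' u ^ 2) := by
      refine setIntegral_mono_on hmul.abs hIcd measurableSet_Ioc fun u _ => ?_
      refine abs_le.2 ⟨?_, ?_⟩
      · nlinarith [sq_nonneg (f u + f' u)]
      · nlinarith [sq_nonneg (f u - f' u)]
    have step3 : ∫ u in Set.Ioc c d, (f u ^ 2 + f' u ^ 2)
        ≤ ∫ u in Set.Ioc a b, (f u ^ 2 + f' u ^ 2) :=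
      setIntegral_mono_set hI hnn
        (HasSubset.Subset.eventuallyLE (Set.Ioc_subset_Ioc h1 h2))
    linarith
  rcases le_total x s with hxs | hsx
  · have h := sq_diff f f' hf hxs
    have h2 := habs x s hx.1 hs.2
    have h3 := le_abs_self (∫ u in Set.Ioc x s, 2 * f u * f' u)
    linarith
  · have h := sq_diff f f' hf hsx
    have h2 := habs s x hs.1 hx.2
    have h3 := neg_abs_le (∫ u in Set.Ioc s x, 2 * f u * f' u)
    linarith

private def Ipart (t : ℤ → ℝ) (n : ℤ) : Set ℝ := Set.Ico (t n) (t (n + 1))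

/-- If `(t_n)` is `T`-dense then `V'` is a bounded operator from `H¹(ℝ)` to `L²(ℝ)`:
`‖V'f‖²_{L²} ≤ (T+1)‖f‖²_{L²} + T‖f'‖²_{L²} ≤ (T+1)‖f‖²_{H¹}`. -/
theorem V'op_bounded (T : ℝ) (hT : 0 < T) (t : ℤ → ℝ) (ht : TDense T t)
    (f f' : ℝ → ℝ) (hf : MemH1 f f') :
    MemLp (V'op t f) 2 (volume : Measure ℝ) ∧
    (∫ x : ℝ, (V'op t f x) ^ 2) ≤
      (T + 1) * (∫ x : ℝ, (f x) ^ 2) + T * (∫ x : ℝ, (f' x) ^ 2) ∧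
    (T + 1) * (∫ x : ℝ, (f x) ^ 2) + T * (∫ x : ℝ, (f' x) ^ 2) ≤
      (T + 1) * ((∫ x : ℝ, (f x) ^ 2) + ∫ x : ℝ, (f' x) ^ 2) := by
  classical
  have hImeas : ∀ n, MeasurableSet (Ipart t n) := fun n => measurableSet_Ico
  have hdis : ∀ m n : ℤ, m < n → Disjoint (Ipart t m) (Ipart t n) := by
    intro m n h
    refine Set.disjoint_left.2 ?_
    rintro x ⟨hx1, hx2⟩ ⟨hy1, hy2⟩
    have h1 : t (m + 1) ≤ t n := ht.mono.monotone (by omega)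
    exact absurd (hx2.trans_le (h1.trans hy1)) (lt_irrefl x)
  have hIdisj : Pairwise (Function.onFun Disjoint (Ipart t)) := fun m n hmn =>
    hmn.lt_or_gt.elim (hdis m n) fun h => (hdis n m h).symm
  have hcover : ∀ x : ℝ, ∃ n, x ∈ Ipart t n := by
    intro x
    have h1 : ∃ n : ℤ, t n ≤ x := (ht.bot.eventually (eventually_le_atBot x)).exists
    have h2 : ∃ N : ℤ, ∀ n, N ≤ n → x < t n :=
      eventually_atTop.1 (ht.top.eventually (eventually_gt_atTop x))
    obtain ⟨N, hN⟩ := h2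
    have hbdd : ∀ z : ℤ, t z ≤ x → z ≤ N := by
      intro z hz
      by_contra hc
      push_neg at hc
      exact absurd (hN z (by omega)) (not_lt.2 hz)
    obtain ⟨n, hn1, hn2⟩ := Int.exists_greatest_of_bdd ⟨N, hbdd⟩ h1
    refine ⟨n, hn1, ?_⟩
    by_contra hc
    push_neg at hc
    have := hn2 (n + 1) hc
    omega
  have huniq : ∀ (x : ℝ) (n m : ℤ), x ∈ Ipart t n → x ∈ Ipart t m → m = n := by
    intro x n m hn hm
    by_contra hc
    exact Set.disjoint_left.1 (hIdisj hc) hm hn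
  have heval : ∀ (n : ℤ) (x : ℝ), x ∈ Ipart t n → V'op t f x = f (sPt t (n + 1)) := by
    intro n x hx
    have hrw : V'op t f x
        = ∑' m : ℤ, Set.indicator (Ipart t m) (fun _ => f (sPt t (m + 1))) x := rfl
    rw [hrw, tsum_eq_single n ?_]
    · exact Set.indicator_of_mem hx _
    · intro m hmn
      exact Set.indicator_of_notMem (fun hxm => hmn (huniq x n m hx hxm)) _
  choose Nx hNx using hcover
  have hNmeas : Measurable Nx := by
    apply measurable_to_countable'
    intro n
    have hpre : Nx ⁻¹' {n} = Ipart t n := by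
      ext x
      simp only [Set.mem_preimage, Set.mem_singleton_iff]
      constructor
      · rintro rfl; exact hNx x
      · intro hx; exact (huniq x (Nx x) n (hNx x) hx).symm ▸ rfl
    rw [hpre]; exact hImeas n
  have hVeq : V'op t f = fun x => f (sPt t (Nx x + 1)) :=
    funext fun x => heval (Nx x) x (hNx x)
  have hVmeas : Measurable (V'op t f) := by
    rw [hVeq]
    exact (measurable_from_top (f := fun n : ℤ => f (sPt t (n + 1)))).comp hNmeas
  -- ENNReal versions of the squares
  set Pf := fun x : ℝ => ENNReal.ofReal (f x ^ 2) with hPfdef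
  set Pf' := fun x : ℝ => ENNReal.ofReal (f' x ^ 2) with hPf'def
  set PV := fun x : ℝ => ENNReal.ofReal ((V'op t f x) ^ 2) with hPVdef
  have hUniv : (⋃ n, Ipart t n) = Set.univ :=
    Set.eq_univ_of_forall fun x => Set.mem_iUnion.2 ⟨Nx x, hNx x⟩
  have hsplit : ∀ G : ℝ → ℝ≥0∞, ∫⁻ x, G x = ∑' n : ℤ, ∫⁻ x in Ipart t n, G x := by
    intro G
    conv_lhs => rw [← setLIntegral_univ (μ := volume), ← hUniv]
    rw [lintegral_iUnion hImeas hIdisj]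
  have hf2 : ENNReal.ofReal (∫ x, f x ^ 2) = ∫⁻ x, Pf x :=
    ofReal_integral_eq_lintegral_ofReal hf.mem.integrable_sq
      (Filter.Eventually.of_forall fun x => sq_nonneg _)
  have hf'2 : ENNReal.ofReal (∫ x, f' x ^ 2) = ∫⁻ x, Pf' x :=
    ofReal_integral_eq_lintegral_ofReal hf.mem'.integrable_sq
      (Filter.Eventually.of_forall fun x => sq_nonneg _)
  have hEf_ne : ∫⁻ x, Pf x ≠ ⊤ := by rw [← hf2]; exact ENNReal.ofReal_ne_top
  have hEf'_ne : ∫⁻ x, Pf' x ≠ ⊤ := by rw [← hf'2]; exact ENNReal.ofReal_ne_top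
  set B := fun n : ℤ => ∫ u in Set.Ioc (t n) (t (n + 1)), (f u ^ 2 + f' u ^ 2) with hBdef
  have hBof : ∀ n : ℤ, ENNReal.ofReal (B n) = ∫⁻ u in Ipart t n, (Pf u + Pf' u) := by
    intro n
    have hint : IntegrableOn (fun u => f u ^ 2 + f' u ^ 2) (Set.Ioc (t n) (t (n + 1))) volume :=
      (hf.mem.integrable_sq.add hf.mem'.integrable_sq).integrableOn
    have h1 : ENNReal.ofReal (B n)
        = ∫⁻ u in Set.Ioc (t n) (t (n + 1)), ENNReal.ofReal (f u ^ 2 + f' u ^ 2) :=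
      ofReal_integral_eq_lintegral_ofReal hint
        (Filter.Eventually.of_forall fun u => by positivity)
    rw [h1, ← setLIntegral_congr (Ico_ae_eq_Ioc (a := t n) (b := t (n + 1)))]
    refine setLIntegral_congr_fun measurableSet_Ico
      (fun u _ => ?_)
    exact ENNReal.ofReal_add (sq_nonneg _) (sq_nonneg _)
  have hptn : ∀ n : ℤ, ∀ x ∈ Ipart t n, (V'op t f x) ^ 2 ≤ f x ^ 2 + B n := by
    intro n x hx
    rw [heval n x hx]
    have hlt : t n < t (n + 1) := ht.mono (by omega)
    have hmid : sPt t (n + 1) = (t n + t (n + 1)) / 2 := by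
      unfold sPt
      norm_num
    have hsmem : sPt t (n + 1) ∈ Set.Icc (t n) (t (n + 1)) := by
      rw [hmid]
      constructor <;> [linarith; linarith]
    exact ptBound f f' hf (Set.mem_Icc.2 ⟨hx.1, hx.2.le⟩) hsmem
  have hmain : ∀ n : ℤ, ∫⁻ x in Ipart t n, PV x
      ≤ (∫⁻ x in Ipart t n, Pf x)
        + ENNReal.ofReal T * ∫⁻ x in Ipart t n, (Pf x + Pf' x) := by
    intro n
    have hstep1 : ∫⁻ x in Ipart t n, PV x
        ≤ ∫⁻ x in Ipart t n, (Pf x + ENNReal.ofReal (B n)) := by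
      refine lintegral_mono_ae ((ae_restrict_iff' (hImeas n)).2
        (Filter.Eventually.of_forall fun x hx => ?_))
      calc PV x ≤ ENNReal.ofReal (f x ^ 2 + B n) :=
            ENNReal.ofReal_le_ofReal (hptn n x hx)
        _ ≤ Pf x + ENNReal.ofReal (B n) := ENNReal.ofReal_add_le
    have hstep2 : ∫⁻ x in Ipart t n, (Pf x + ENNReal.ofReal (B n))
        = (∫⁻ x in Ipart t n, Pf x) + ENNReal.ofReal (B n) * volume (Ipart t n) := by
      rw [lintegral_add_right _ measurable_const, setLIntegral_const]
    have hvol : volume (Ipart t n) ≤ ENNReal.ofReal T := by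
      have : volume (Ipart t n) = ENNReal.ofReal (t (n + 1) - t n) := Real.volume_Ico
      rw [this]
      exact ENNReal.ofReal_le_ofReal (ht.dense n)
    have hBT : ENNReal.ofReal (B n) * volume (Ipart t n)
        ≤ ENNReal.ofReal T * ∫⁻ x in Ipart t n, (Pf x + Pf' x) := by
      rw [hBof n, mul_comm]
      exact mul_le_mul' hvol le_rfl
    calc ∫⁻ x in Ipart t n, PV x
        ≤ (∫⁻ x in Ipart t n, Pf x) + ENNReal.ofReal (B n) * volume (Ipart t n) := by
          rw [← hstep2]; exact hstep1
      _ ≤ (∫⁻ x in Ipart t n, Pf x)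
          + ENNReal.ofReal T * ∫⁻ x in Ipart t n, (Pf x + Pf' x) := add_le_add le_rfl hBT
  have hPfmeas : Measurable Pf :=
    ENNReal.measurable_ofReal.comp (hf.cont.measurable.pow_const 2)
  have hsum : ∫⁻ x, PV x
      ≤ (∫⁻ x, Pf x) + ENNReal.ofReal T * ((∫⁻ x, Pf x) + ∫⁻ x, Pf' x) := by
    have h1 : ∑' n : ℤ, ∫⁻ x in Ipart t n, PV x
        ≤ ∑' n : ℤ, ((∫⁻ x in Ipart t n, Pf x)
            + ENNReal.ofReal T * ∫⁻ x in Ipart t n, (Pf x + Pf' x)) :=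
      ENNReal.tsum_le_tsum hmain
    rw [ENNReal.tsum_add, ENNReal.tsum_mul_left] at h1
    rw [hsplit PV]
    refine h1.trans ?_
    rw [← hsplit Pf, ← hsplit (fun x => Pf x + Pf' x)]
    rw [lintegral_add_left hPfmeas]
  set R := (∫⁻ x, Pf x) + ENNReal.ofReal T * ((∫⁻ x, Pf x) + ∫⁻ x, Pf' x) with hRdef
  have hRadd_ne : ENNReal.ofReal T * ((∫⁻ x, Pf x) + ∫⁻ x, Pf' x) ≠ ⊤ :=
    ENNReal.mul_ne_top ENNReal.ofReal_ne_top (ENNReal.add_ne_top.2 ⟨hEf_ne, hEf'_ne⟩)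
  have hRne : R ≠ ⊤ := ENNReal.add_ne_top.2 ⟨hEf_ne, hRadd_ne⟩
  have hPVne : ∫⁻ x, PV x ≠ ⊤ := ne_top_of_le_ne_top hRne hsum
  have hmem : MemLp (V'op t f) 2 (volume : Measure ℝ) := by
    refine ⟨hVmeas.aestronglyMeasurable, ?_⟩
    rw [eLpNorm_eq_lintegral_rpow_enorm_toReal two_ne_zero ENNReal.ofNat_ne_top]
    have h2 : (2 : ℝ≥0∞).toReal = 2 := by simp
    rw [h2]
    have hrw : ∫⁻ x, ‖V'op t f x‖ₑ ^ (2 : ℝ) = ∫⁻ x, PV x := by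
      refine lintegral_congr fun x => ?_
      have ha : ‖V'op t f x‖ₑ ^ (2 : ℝ)
          = ‖V'op t f x‖ₑ ^ (2 : ℕ) := by
        rw [← ENNReal.rpow_natCast]; norm_num
      rw [ha, ← enorm_pow, Real.enorm_eq_ofReal (sq_nonneg _)]
    rw [hrw]
    exact ENNReal.rpow_lt_top_of_nonneg (by norm_num) hPVne
  have hVreal : ∫ x, (V'op t f x) ^ 2 = (∫⁻ x, PV x).toReal := by
    rw [integral_eq_lintegral_of_nonneg_ae (Filter.Eventually.of_forall fun x => sq_nonneg _)
      ((hVmeas.pow_const 2).aestronglyMeasurable)]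
  have hα : (0 : ℝ) ≤ ∫ x, f x ^ 2 := integral_nonneg fun x => sq_nonneg _
  have hβ : (0 : ℝ) ≤ ∫ x, f' x ^ 2 := integral_nonneg fun x => sq_nonneg _
  have hfreal : (∫⁻ x, Pf x).toReal = ∫ x, f x ^ 2 := by
    rw [← hf2, ENNReal.toReal_ofReal hα]
  have hf'real : (∫⁻ x, Pf' x).toReal = ∫ x, f' x ^ 2 := by
    rw [← hf'2, ENNReal.toReal_ofReal hβ]
  refine ⟨hmem, ?_, ?_⟩
  · have h := ENNReal.toReal_mono hRne hsum
    have hRval : R.toReal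
        = (∫ x, f x ^ 2) + T * ((∫ x, f x ^ 2) + ∫ x, f' x ^ 2) := by
      rw [hRdef, ENNReal.toReal_add hEf_ne hRadd_ne, ENNReal.toReal_mul,
        ENNReal.toReal_ofReal hT.le,
        ENNReal.toReal_add hEf_ne hEf'_ne, hfreal, hf'real]
    rw [hVreal]
    rw [hRdef] at hRval
    rw [hRval] at h
    linarith
  · nlinarith [hβ, hT.le]
end
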